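/- Let τ be the nonincreasing rearrangement of the two-dimensional sequence σ_2(n_1,n_2) = n_1^{-1}·n_2^{-2}. Then limsup_{n→∞} τ(n)·n ≤ 2. -/

import Mathlib

open Filter Real Set

theorem aux_sum (N : ℕ) : ∑ b ∈ Finset.Icc 1 N, ((b:ℝ)^2)⁻¹ ≤ 2 := by
  rcases Nat.eq_zero_or_pos N with h | h
  · simp [h]
  have : ∑ b ∈ Finset.Icc 1 N, ((b:ℝ)^2)⁻¹ ≤ 2 - (N:ℝ)⁻¹ := by
    induction N, h using Nat.le_induction with
    | base => simp; norm_num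
    | succ N hN ih =>
      rw [Finset.sum_Icc_succ_top (by omega)]
      have hN' : (0:ℝ) < N := by exact_mod_cast hN
      have h1 : (((N:ℝ)+1)^2)⁻¹ ≤ (N:ℝ)⁻¹ - ((N:ℝ)+1)⁻¹ := by
        rw [inv_sub_inv (ne_of_gt hN') (by positivity),
          inv_le_iff_one_le_mul₀ (by positivity)]
        rw [div_mul_eq_mul_div, le_div_iff₀ (by positivity)]
        nlinarith
      push_cast
      linarith
  have hinv : (0:ℝ) ≤ (N:ℝ)⁻¹ := by positivity
  linarith

theorem aux_count (K : ℕ) :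
    ((((Finset.Icc 1 K ×ˢ Finset.Icc 1 K).filter
      (fun p : ℕ × ℕ => p.1 * p.2 ^ 2 ≤ K)).card : ℝ)) ≤ 2 * K := by
  set F := (Finset.Icc 1 K ×ˢ Finset.Icc 1 K).filter (fun p : ℕ × ℕ => p.1 * p.2 ^ 2 ≤ K) with hF
  have hcard : F.card = ∑ b ∈ Finset.Icc 1 K, (F.filter (fun p => p.2 = b)).card :=
    Finset.card_eq_sum_card_fiberwise (by
      intro p hp
      simp only [hF, Finset.mem_coe, Finset.mem_filter, Finset.mem_product] at hp
      exact hp.1.2)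
  have hfib : ∀ b ∈ Finset.Icc 1 K, (F.filter (fun p => p.2 = b)).card ≤ K / b ^ 2 := by
    intro b hb
    have hb1 : 1 ≤ b := (Finset.mem_Icc.mp hb).1
    have : (F.filter (fun p => p.2 = b)).card ≤ (Finset.Icc 1 (K / b ^ 2)).card := by
      apply Finset.card_le_card_of_injOn Prod.fst
      · intro p hp
        simp only [hF, Finset.mem_coe, Finset.mem_filter, Finset.mem_product, Finset.mem_Icc] at hp ⊢
        obtain ⟨⟨⟨⟨h1, _⟩, _⟩, h3⟩, h4⟩ := hp
        refine ⟨h1, ?_⟩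
        rw [Nat.le_div_iff_mul_le (by positivity)]
        rw [h4] at h3; exact h3
      · intro p hp q hq hpq
        simp only [Finset.mem_coe, Finset.mem_filter] at hp hq
        exact Prod.ext hpq (hp.2.trans hq.2.symm)
    simpa using this
  calc (F.card : ℝ) ≤ ∑ b ∈ Finset.Icc 1 K, ((K / b ^ 2 : ℕ) : ℝ) := by
        rw [hcard]; push_cast; exact Finset.sum_le_sum (fun b hb => by exact_mod_cast hfib b hb)
    _ ≤ ∑ b ∈ Finset.Icc 1 K, (K : ℝ) * ((b:ℝ)^2)⁻¹ := by
        apply Finset.sum_le_sum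
        intro b hb
        rw [mul_comm, inv_mul_eq_div]
        calc ((K / b ^ 2 : ℕ) : ℝ) ≤ (K : ℝ) / ((b:ℕ)^2 : ℕ) := Nat.cast_div_le
          _ = (K:ℝ) / (b:ℝ)^2 := by push_cast; ring
    _ = (K : ℝ) * ∑ b ∈ Finset.Icc 1 K, ((b:ℝ)^2)⁻¹ := by rw [Finset.mul_sum]
    _ ≤ (K : ℝ) * 2 := mul_le_mul_of_nonneg_left (aux_sum K) (by positivity)
    _ = 2 * K := by ring

theorem aux_set (f : ℕ+ × ℕ+ → ℝ)
    (hf : ∀ p : ℕ+ × ℕ+, f p = ((p.1 : ℕ) : ℝ)⁻¹ * (((p.2 : ℕ) : ℝ) ^ 2)⁻¹)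
    (t : ℝ) (ht : 0 < t) :
    {p : ℕ+ × ℕ+ | t ≤ f p} =
      (fun p : ℕ+ × ℕ+ => ((p.1 : ℕ), (p.2 : ℕ))) ⁻¹'
        ↑((Finset.Icc 1 ⌊t⁻¹⌋₊ ×ˢ Finset.Icc 1 ⌊t⁻¹⌋₊).filter
          (fun p : ℕ × ℕ => p.1 * p.2 ^ 2 ≤ ⌊t⁻¹⌋₊)) := by
  ext p
  have ha : 0 < ((p.1 : ℕ)) := p.1.pos
  have hb : 0 < ((p.2 : ℕ)) := p.2.pos
  simp only [mem_setOf_eq, mem_preimage, Finset.coe_filter, Finset.mem_product,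
    Finset.mem_Icc, mem_setOf_eq, hf]
  have hab : (0:ℝ) < ((p.1:ℕ) : ℝ) * ((p.2:ℕ):ℝ)^2 := by positivity
  have key : t ≤ (((p.1:ℕ):ℝ))⁻¹ * (((p.2:ℕ):ℝ)^2)⁻¹ ↔ (p.1:ℕ) * (p.2:ℕ) ^ 2 ≤ ⌊t⁻¹⌋₊ := by
    rw [← mul_inv, le_inv_comm₀ ht hab, ← Nat.cast_pow, ← Nat.cast_mul,
      ← Nat.le_floor_iff (by positivity)]
  rw [key]
  constructor
  · intro h
    refine ⟨⟨⟨ha, ?_⟩, hb, ?_⟩, h⟩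
    · calc (p.1:ℕ) ≤ (p.1:ℕ) * (p.2:ℕ) ^ 2 := Nat.le_mul_of_pos_right _ (by positivity)
        _ ≤ _ := h
    · calc (p.2:ℕ) ≤ (p.1:ℕ) * (p.2:ℕ) ^ 2 := by nlinarith
        _ ≤ _ := h
  · exact fun h => h.2

theorem stmt_14 (f : ℕ+ × ℕ+ → ℝ)
    (hf : ∀ p : ℕ+ × ℕ+, f p = ((p.1 : ℕ) : ℝ)⁻¹ * (((p.2 : ℕ) : ℝ) ^ 2)⁻¹)
    (τ : ℕ+ → ℝ) (hτa : Antitone τ)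
    -- τ is the nonincreasing rearrangement of f
    (hre : ∀ t : ℝ, 0 < t →
      {n : ℕ+ | t ≤ τ n}.ncard = {p : ℕ+ × ℕ+ | t ≤ f p}.ncard) :
    Filter.limsup (fun n : ℕ+ => τ n * ((n : ℕ) : ℝ)) Filter.atTop ≤ 2 := by
  set g : ℕ+ × ℕ+ → ℕ × ℕ := fun p => ((p.1 : ℕ), (p.2 : ℕ)) with hg
  have hginj : Function.Injective g := by
    intro p q h
    exact Prod.ext (PNat.coe_injective (congrArg Prod.fst h))
      (PNat.coe_injective (congrArg Prod.snd h))
  have hfin : ∀ t : ℝ, 0 < t → {p : ℕ+ × ℕ+ | t ≤ f p}.Finite := by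
    intro t ht
    rw [aux_set f hf t ht]
    exact Set.Finite.preimage hginj.injOn (Finset.finite_toSet _)
  have hcount : ∀ t : ℝ, 0 < t → ({p : ℕ+ × ℕ+ | t ≤ f p}.ncard : ℝ) ≤ 2 / t := by
    intro t ht
    rw [aux_set f hf t ht]
    set F := (Finset.Icc 1 ⌊t⁻¹⌋₊ ×ˢ Finset.Icc 1 ⌊t⁻¹⌋₊).filter
      (fun p : ℕ × ℕ => p.1 * p.2 ^ 2 ≤ ⌊t⁻¹⌋₊) with hF
    have h1 : (g ⁻¹' ↑F).ncard ≤ F.card := by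
      rw [← Set.ncard_coe_finset F, ← Set.ncard_image_of_injective _ hginj]
      exact Set.ncard_le_ncard (Set.image_preimage_subset g ↑F) (Finset.finite_toSet F)
    calc ((g ⁻¹' ↑F).ncard : ℝ) ≤ (F.card : ℝ) := by exact_mod_cast h1
      _ ≤ 2 * ⌊t⁻¹⌋₊ := aux_count _
      _ ≤ 2 * t⁻¹ := by
          have := Nat.floor_le (le_of_lt (inv_pos.mpr ht))
          linarith
      _ = 2 / t := by rw [div_eq_mul_inv]
  have key : ∀ n : ℕ+, τ n * ((n:ℕ):ℝ) ≤ 2 := by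
    intro n
    by_cases hτ : 0 < τ n
    · have hLsub : Set.Icc 1 n ⊆ {m : ℕ+ | τ n ≤ τ m} := fun m hm => hτa hm.2
      have hLfin : {m : ℕ+ | τ n ≤ τ m}.Finite := by
        by_contra hinf
        have ht0 : (0:ℝ) < min (τ n) 1 := lt_min hτ one_pos
        have hsub : {m : ℕ+ | τ n ≤ τ m} ⊆ {m : ℕ+ | min (τ n) 1 ≤ τ m} :=
          fun m hm => le_trans (min_le_left (τ n) 1) hm
        have hinf' : {m : ℕ+ | min (τ n) 1 ≤ τ m}.Infinite :=
          Set.Infinite.mono hsub hinf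
        have h0 : {m : ℕ+ | min (τ n) 1 ≤ τ m}.ncard = 0 := hinf'.ncard
        have hmem : ((1, 1) : ℕ+ × ℕ+) ∈ {p : ℕ+ × ℕ+ | min (τ n) 1 ≤ f p} := by
          rw [mem_setOf_eq, hf]
          simp only [PNat.one_coe, Nat.cast_one, inv_one, one_pow, mul_one]
          exact min_le_right (τ n) 1
        have hpos : 0 < {p : ℕ+ × ℕ+ | min (τ n) 1 ≤ f p}.ncard :=
          (Set.ncard_pos (hfin _ ht0)).mpr ⟨_, hmem⟩
        rw [hre _ ht0] at h0
        omega
      have hn : (n : ℕ) ≤ {m : ℕ+ | τ n ≤ τ m}.ncard := by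
        have : (Set.Icc 1 n).ncard = (n : ℕ) := by
          rw [← Finset.coe_Icc, Set.ncard_coe_finset, PNat.card_Icc]
          simp
        rw [← this]
        exact Set.ncard_le_ncard hLsub hLfin
      have hchain : ((n:ℕ):ℝ) ≤ 2 / τ n := by
        calc ((n:ℕ):ℝ) ≤ ({m : ℕ+ | τ n ≤ τ m}.ncard : ℝ) := by exact_mod_cast hn
          _ = ({p : ℕ+ × ℕ+ | τ n ≤ f p}.ncard : ℝ) := by rw [hre _ hτ]
          _ ≤ 2 / τ n := hcount _ hτ
      rw [le_div_iff₀ hτ] at hchain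
      linarith
    · have h1 : τ n * ((n:ℕ):ℝ) ≤ 0 :=
        mul_nonpos_of_nonpos_of_nonneg (le_of_not_gt hτ) (by positivity)
      linarith
  rw [Filter.limsup_eq]
  have h2 : (2:ℝ) ∈ {a : ℝ | ∀ᶠ n in atTop, τ n * ((n:ℕ):ℝ) ≤ a} :=
    Filter.Eventually.of_forall key
  by_cases hbdd : BddBelow {a : ℝ | ∀ᶠ n in atTop, τ n * ((n:ℕ):ℝ) ≤ a}
  · exact csInf_le hbdd h2
  · rw [Real.sInf_of_not_bddBelow hbdd]; norm_num
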